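/- Cases of the trace workflow exactly characterize compliant cases of the original workflow: a case C (a sequence of valid firings from the initial state to a final state) of W^τ exists with projection Π_τ(C) if and only if Π_τ(C) is a case of W with which the full trace τ is compliant; conversely, for every case C of W with which τ is compliant there is a case C' of W^τ with Π_τ(C') = C. -/
import Mathlib


/-- A DAW-net. -/
structure DAWNet (P T V O : Type) where
  pre : T → Set P
  post : T → Set P
  wr : T → V → Option (Set O)
  gd : T → ((V → Option O) → Prop)

/-- Valid firing of a transition `t` from state `(M, η)` to state `(M', η')`. -/
def ValidFiring {P T V O : Type} (W : DAWNet P T V O)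
    (M : P → ℕ) (η : V → Option O) (t : T) (M' : P → ℕ) (η' : V → Option O) : Prop :=
  (∀ p ∈ W.pre t, 0 < M p) ∧
  W.gd t η ∧
  (∀ p, (p ∈ W.pre t ∧ p ∉ W.post t → M' p = M p - 1) ∧
        (p ∈ W.post t ∧ p ∉ W.pre t → M' p = M p + 1) ∧
        ((p ∈ W.pre t ↔ p ∈ W.post t) → M' p = M p)) ∧
  (∀ v (s : Set O), W.wr t v = some s →
      (s = ∅ → η' v = none) ∧ (s.Nonempty → ∃ o ∈ s, η' v = some o)) ∧
  (∀ v, W.wr t v = none → η' v = η v)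

/-- Sequences of valid firings. -/
inductive FiringSeq {P T V O : Type} (W : DAWNet P T V O) :
    ((P → ℕ) × (V → Option O)) → List (T × (P → ℕ) × (V → Option O)) →
    ((P → ℕ) × (V → Option O)) → Prop
  | nil (s : (P → ℕ) × (V → Option O)) : FiringSeq W s [] s
  | cons {s : (P → ℕ) × (V → Option O)} {t : T} {M' : P → ℕ} {η' : V → Option O}
      {l : List (T × (P → ℕ) × (V → Option O))} {e : (P → ℕ) × (V → Option O)} :
      ValidFiring W s.1 s.2 t M' η' → FiringSeq W (M', η') l e →
      FiringSeq W s ((t, M', η') :: l) e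

/-- Compliance of a trace with a sequence of valid firings. -/
def Compliant {P T V O : Type} {m : ℕ} (ev : Fin m → T × ((V → Option O) → Prop))
    (l : List (T × (P → ℕ) × (V → Option O))) : Prop :=
  ∃ γ : Fin m → Fin l.length, StrictMono γ ∧
    ∀ i : Fin m, (l.get (γ i)).1 = (ev i).1 ∧ (ev i).2 (l.get (γ i)).2.2

/-- A final state of `W` : one token in `sink`, no tokens elsewhere. -/
def FinalW {P : Type} (sink : P) (M : P → ℕ) : Prop :=
  M sink = 1 ∧ ∀ p, p ≠ sink → M p = 0

/-- A final state of the trace workflow `Wτ` : one token in `sink`, no tokens in the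
other original places, the chain completed (all chain places empty except the last one,
which holds the token witnessing that `t_{e_n}` has fired). -/
def FinalWτ {P : Type} {n : ℕ} (sink : P) (M : (P ⊕ Fin n) → ℕ) : Prop :=
  M (Sum.inl sink) = 1 ∧ (∀ p : P, p ≠ sink → M (Sum.inl p) = 0) ∧
  ∀ j : Fin n, ((j : ℕ) + 1 < n → M (Sum.inr j) = 0) ∧
               ((j : ℕ) + 1 = n → M (Sum.inr j) = 1)

namespace TraceWF

def cntTr {T : Type} {n : ℕ} (m : ℕ) : List (T ⊕ Fin n) → ℕ
  | [] => 0
  | (.inl _) :: ts => cntTr m ts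
  | (.inr k) :: ts => (if (k : ℕ) = m then 1 else 0) + cntTr m ts

variable {T : Type} {n : ℕ}

lemma cntTr_append (m : ℕ) (l1 l2 : List (T ⊕ Fin n)) :
    cntTr m (l1 ++ l2) = cntTr m l1 + cntTr m l2 := by
  induction l1 with
  | nil => simp [cntTr]
  | cons x l ih => cases x <;> simp [cntTr, ih] <;> omega

lemma cntTr_top (ts : List (T ⊕ Fin n)) : cntTr n ts = 0 := by
  induction ts with
  | nil => rfl
  | cons x l ih =>
    cases x with
    | inl t => simpa [cntTr] using ih
    | inr k => simp [cntTr, ih, Nat.ne_of_lt k.isLt]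

lemma cntTr_pos {m : ℕ} {ts : List (T ⊕ Fin n)} (h : 0 < cntTr m ts) :
    ∃ q, ∃ _ : q < ts.length, ∃ k : Fin n, ts[q] = Sum.inr k ∧ (k : ℕ) = m := by
  induction ts with
  | nil => simp [cntTr] at h
  | cons x l ih =>
    cases x with
    | inl t =>
      obtain ⟨q, hq, k, hk, hkm⟩ := ih (by simpa [cntTr] using h)
      exact ⟨q + 1, by simpa using hq, k, by simpa using hk, hkm⟩
    | inr k =>
      by_cases hk : (k : ℕ) = m
      · exact ⟨0, by simp, k, by simp, hk⟩
      · obtain ⟨q, hq, k', hk', hkm⟩ := ih (by simpa [cntTr, hk] using h)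
        exact ⟨q + 1, by simpa using hq, k', by simpa using hk', hkm⟩

lemma cntTr_pos_of_get {ts : List (T ⊕ Fin n)} {q : ℕ} (hq : q < ts.length) {k : Fin n}
    (h : ts[q] = Sum.inr k) : 0 < cntTr (k : ℕ) ts := by
  induction ts generalizing q with
  | nil => simp at hq
  | cons x l ih =>
    cases q with
    | zero =>
      simp at h; subst h; simp [cntTr]
    | succ q =>
      have hh := ih (q := q) (by simpa using hq) (by simpa using h)
      cases x with
      | inl t => simpa [cntTr] using hh
      | inr k' => simp [cntTr]; omega

lemma get_cons_of_pos {α : Type*} (x : α) (tl : List α) (idx : Fin (x :: tl).length)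
    (h : 1 ≤ (idx : ℕ)) (h2 : (idx : ℕ) - 1 < tl.length) :
    (x :: tl).get idx = tl.get ⟨(idx : ℕ) - 1, h2⟩ := by
  rcases idx with ⟨v, hv⟩
  cases v with
  | zero => simp at h
  | succ v => simp [List.get_eq_getElem]


section Net

variable {P V O : Type} {W : DAWNet P T V O} {Wτ : DAWNet (P ⊕ Fin n) (T ⊕ Fin n) V O}
  {ev : Fin n → T × ((V → Option O) → Prop)}

lemma mem_pre_inl_inl (hpreT : ∀ t : T, Wτ.pre (Sum.inl t) = Sum.inl '' W.pre t)
    (t : T) (p : P) : Sum.inl p ∈ Wτ.pre (Sum.inl t) ↔ p ∈ W.pre t := by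
  simp [hpreT t]

lemma mem_post_inl_inl (hpostT : ∀ t : T, Wτ.post (Sum.inl t) = Sum.inl '' W.post t)
    (t : T) (p : P) : Sum.inl p ∈ Wτ.post (Sum.inl t) ↔ p ∈ W.post t := by
  simp [hpostT t]

lemma not_mem_pre_inl_inr (hpreT : ∀ t : T, Wτ.pre (Sum.inl t) = Sum.inl '' W.pre t)
    (t : T) (j : Fin n) : Sum.inr j ∉ Wτ.pre (Sum.inl t) := by
  simp [hpreT t]

lemma not_mem_post_inl_inr (hpostT : ∀ t : T, Wτ.post (Sum.inl t) = Sum.inl '' W.post t)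
    (t : T) (j : Fin n) : Sum.inr j ∉ Wτ.post (Sum.inl t) := by
  simp [hpostT t]

lemma mem_pre_inr_inr
    (hpreE : ∀ i : Fin n, Wτ.pre (Sum.inr i) =
      Sum.inl '' W.pre (ev i).1 ∪ {q | ∃ j : Fin n, (j : ℕ) + 1 = (i : ℕ) ∧ q = Sum.inr j})
    (i j : Fin n) : Sum.inr j ∈ Wτ.pre (Sum.inr i) ↔ (j : ℕ) + 1 = (i : ℕ) := by
  simp only [hpreE i, Set.mem_union, Set.mem_image, Set.mem_setOf_eq]
  constructor
  · rintro (⟨p, _, hp⟩ | ⟨j', hj', hq⟩)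
    · simp at hp
    · obtain rfl : j = j' := by simpa using hq
      exact hj'
  · intro h
    exact Or.inr ⟨j, h, rfl⟩

lemma mem_post_inr_inr
    (hpostE : ∀ i : Fin n, Wτ.post (Sum.inr i) = Sum.inl '' W.post (ev i).1 ∪ {Sum.inr i})
    (i j : Fin n) : Sum.inr j ∈ Wτ.post (Sum.inr i) ↔ j = i := by
  simp only [hpostE i, Set.mem_union, Set.mem_image, Set.mem_singleton_iff]
  constructor
  · rintro (⟨p, _, hp⟩ | hq)
    · simp at hp
    · simpa using hq
  · rintro rfl
    exact Or.inr rfl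

lemma mem_pre_inr_inl
    (hpreE : ∀ i : Fin n, Wτ.pre (Sum.inr i) =
      Sum.inl '' W.pre (ev i).1 ∪ {q | ∃ j : Fin n, (j : ℕ) + 1 = (i : ℕ) ∧ q = Sum.inr j})
    (i : Fin n) (p : P) : Sum.inl p ∈ Wτ.pre (Sum.inr i) ↔ p ∈ W.pre (ev i).1 := by
  simp only [hpreE i, Set.mem_union, Set.mem_image, Set.mem_setOf_eq]
  constructor
  · rintro (⟨p', hp', h⟩ | ⟨j', _, h⟩)
    · obtain rfl : p' = p := by simpa using h
      exact hp'
    · simp at h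
  · intro h
    exact Or.inl ⟨p, h, rfl⟩

lemma mem_post_inr_inl
    (hpostE : ∀ i : Fin n, Wτ.post (Sum.inr i) = Sum.inl '' W.post (ev i).1 ∪ {Sum.inr i})
    (i : Fin n) (p : P) : Sum.inl p ∈ Wτ.post (Sum.inr i) ↔ p ∈ W.post (ev i).1 := by
  simp only [hpostE i, Set.mem_union, Set.mem_image, Set.mem_singleton_iff]
  constructor
  · rintro (⟨p', hp', h⟩ | h)
    · obtain rfl : p' = p := by simpa using h
      exact hp'
    · simp at h
  · intro h
    exact Or.inl ⟨p, h, rfl⟩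


lemma chain_inl (hpreT : ∀ t : T, Wτ.pre (Sum.inl t) = Sum.inl '' W.pre t)
    (hpostT : ∀ t : T, Wτ.post (Sum.inl t) = Sum.inl '' W.post t)
    {M : (P ⊕ Fin n) → ℕ} {η : V → Option O} {t : T} {M' : (P ⊕ Fin n) → ℕ}
    {η' : V → Option O} (hv : ValidFiring Wτ M η (Sum.inl t) M' η') (j : Fin n) :
    M' (Sum.inr j) = M (Sum.inr j) :=
  (hv.2.2.1 (Sum.inr j)).2.2 (by rw [hpreT, hpostT]; simp)

lemma chain_inr
    (hpreE : ∀ i : Fin n, Wτ.pre (Sum.inr i) =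
      Sum.inl '' W.pre (ev i).1 ∪ {q | ∃ j : Fin n, (j : ℕ) + 1 = (i : ℕ) ∧ q = Sum.inr j})
    (hpostE : ∀ i : Fin n, Wτ.post (Sum.inr i) = Sum.inl '' W.post (ev i).1 ∪ {Sum.inr i})
    {M : (P ⊕ Fin n) → ℕ} {η : V → Option O} {i : Fin n} {M' : (P ⊕ Fin n) → ℕ}
    {η' : V → Option O} (hv : ValidFiring Wτ M η (Sum.inr i) M' η') (j : Fin n) :
    ((j : ℕ) + 1 = (i : ℕ) → 0 < M (Sum.inr j) ∧ M' (Sum.inr j) = M (Sum.inr j) - 1) ∧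
    (j = i → M' (Sum.inr j) = M (Sum.inr j) + 1) ∧
    ((j : ℕ) + 1 ≠ (i : ℕ) ∧ j ≠ i → M' (Sum.inr j) = M (Sum.inr j)) := by
  obtain ⟨hpre, -, hmark, -, -⟩ := hv
  have h := hmark (Sum.inr j)
  rw [mem_pre_inr_inr hpreE, mem_post_inr_inr (ev := ev) hpostE] at h
  refine ⟨fun hj => ⟨hpre _ ((mem_pre_inr_inr hpreE i j).2 hj), h.1 ⟨hj, ?_⟩⟩,
    fun hj => h.2.1 ⟨hj, ?_⟩, fun hj => h.2.2 (iff_of_false hj.1 hj.2)⟩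
  · intro hji; subst hji; omega
  · subst hj; omega

lemma proj_firing (hpreT : ∀ t : T, Wτ.pre (Sum.inl t) = Sum.inl '' W.pre t)
    (hpostT : ∀ t : T, Wτ.post (Sum.inl t) = Sum.inl '' W.post t)
    (hwrT : ∀ t : T, Wτ.wr (Sum.inl t) = W.wr t)
    (hgdT : ∀ (t : T) (η : V → Option O), Wτ.gd (Sum.inl t) η ↔ W.gd t η)
    (hpreE : ∀ i : Fin n, Wτ.pre (Sum.inr i) =
      Sum.inl '' W.pre (ev i).1 ∪ {q | ∃ j : Fin n, (j : ℕ) + 1 = (i : ℕ) ∧ q = Sum.inr j})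
    (hpostE : ∀ i : Fin n, Wτ.post (Sum.inr i) = Sum.inl '' W.post (ev i).1 ∪ {Sum.inr i})
    (hgdE : ∀ (i : Fin n) (η : V → Option O), Wτ.gd (Sum.inr i) η → W.gd (ev i).1 η)
    (hwrE : ∀ (i : Fin n) (v : V),
      (Wτ.wr (Sum.inr i) v = none ↔ W.wr (ev i).1 v = none) ∧
      (∀ s s' : Set O, Wτ.wr (Sum.inr i) v = some s → W.wr (ev i).1 v = some s' →
        s ⊆ s' ∧ (s = ∅ ↔ s' = ∅)))
    {M : (P ⊕ Fin n) → ℕ} {η : V → Option O} {t : T ⊕ Fin n} {M' : (P ⊕ Fin n) → ℕ}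
    {η' : V → Option O} (hv : ValidFiring Wτ M η t M' η') :
    ValidFiring W (fun p => M (Sum.inl p)) η (Sum.elim id (fun i => (ev i).1) t)
      (fun p => M' (Sum.inl p)) η' := by
  obtain ⟨hpre, hgd, hmark, hwr, hwrn⟩ := hv
  cases t with
  | inl t =>
    simp only [Sum.elim_inl, id]
    refine ⟨?_, (hgdT t η).1 hgd, ?_, ?_, ?_⟩
    · intro p hp
      exact hpre _ ((mem_pre_inl_inl hpreT t p).2 hp)
    · intro p
      have h := hmark (Sum.inl p)
      rw [mem_pre_inl_inl hpreT, mem_post_inl_inl hpostT] at h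
      exact h
    · intro v s hs
      exact hwr v s (by rwa [hwrT])
    · intro v hvn
      exact hwrn v (by rwa [hwrT])
  | inr i =>
    simp only [Sum.elim_inr]
    refine ⟨?_, hgdE i η hgd, ?_, ?_, ?_⟩
    · intro p hp
      exact hpre _ ((mem_pre_inr_inl hpreE i p).2 hp)
    · intro p
      have h := hmark (Sum.inl p)
      rw [mem_pre_inr_inl hpreE, mem_post_inr_inl (ev := ev) hpostE] at h
      exact h
    · intro v s' hs'
      rcases hws : Wτ.wr (Sum.inr i) v with _ | s
      · rw [(hwrE i v).1, hs'] at hws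
        cases hws
      · obtain ⟨hsub, hemp⟩ := (hwrE i v).2 s s' hws hs'
        obtain ⟨he, hne⟩ := hwr v s hws
        refine ⟨fun h => he (hemp.2 h), fun h => ?_⟩
        have hsne : s.Nonempty := Set.nonempty_iff_ne_empty.2
          (fun h0 => (Set.nonempty_iff_ne_empty.1 h) (hemp.1 h0))
        obtain ⟨o, ho, hoe⟩ := hne hsne
        exact ⟨o, hsub ho, hoe⟩
    · intro v hnone
      exact hwrn v ((hwrE i v).1.2 hnone)


lemma proj_seq (hpreT : ∀ t : T, Wτ.pre (Sum.inl t) = Sum.inl '' W.pre t)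
    (hpostT : ∀ t : T, Wτ.post (Sum.inl t) = Sum.inl '' W.post t)
    (hwrT : ∀ t : T, Wτ.wr (Sum.inl t) = W.wr t)
    (hgdT : ∀ (t : T) (η : V → Option O), Wτ.gd (Sum.inl t) η ↔ W.gd t η)
    (hpreE : ∀ i : Fin n, Wτ.pre (Sum.inr i) =
      Sum.inl '' W.pre (ev i).1 ∪ {q | ∃ j : Fin n, (j : ℕ) + 1 = (i : ℕ) ∧ q = Sum.inr j})
    (hpostE : ∀ i : Fin n, Wτ.post (Sum.inr i) = Sum.inl '' W.post (ev i).1 ∪ {Sum.inr i})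
    (hgdE : ∀ (i : Fin n) (η : V → Option O), Wτ.gd (Sum.inr i) η → W.gd (ev i).1 η)
    (hwrE : ∀ (i : Fin n) (v : V),
      (Wτ.wr (Sum.inr i) v = none ↔ W.wr (ev i).1 v = none) ∧
      (∀ s s' : Set O, Wτ.wr (Sum.inr i) v = some s → W.wr (ev i).1 v = some s' →
        s ⊆ s' ∧ (s = ∅ ↔ s' = ∅)))
    {s : ((P ⊕ Fin n) → ℕ) × (V → Option O)}
    {l : List ((T ⊕ Fin n) × ((P ⊕ Fin n) → ℕ) × (V → Option O))}
    {e : ((P ⊕ Fin n) → ℕ) × (V → Option O)} (h : FiringSeq Wτ s l e) :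
    FiringSeq W (fun p => s.1 (Sum.inl p), s.2)
      (l.map fun x => (Sum.elim id (fun i => (ev i).1) x.1,
        fun p => x.2.1 (Sum.inl p), x.2.2))
      (fun p => e.1 (Sum.inl p), e.2) := by
  induction h with
  | nil s => exact FiringSeq.nil _
  | cons hv hseq ih =>
    exact FiringSeq.cons (proj_firing hpreT hpostT hwrT hgdT hpreE hpostE hgdE hwrE hv) ih

lemma chainA
    (hpreT : ∀ t : T, Wτ.pre (Sum.inl t) = Sum.inl '' W.pre t)
    (hpostT : ∀ t : T, Wτ.post (Sum.inl t) = Sum.inl '' W.post t)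
    (hpreE : ∀ i : Fin n, Wτ.pre (Sum.inr i) =
      Sum.inl '' W.pre (ev i).1 ∪ {q | ∃ j : Fin n, (j : ℕ) + 1 = (i : ℕ) ∧ q = Sum.inr j})
    (hpostE : ∀ i : Fin n, Wτ.post (Sum.inr i) = Sum.inl '' W.post (ev i).1 ∪ {Sum.inr i})
    {s : ((P ⊕ Fin n) → ℕ) × (V → Option O)}
    {l : List ((T ⊕ Fin n) × ((P ⊕ Fin n) → ℕ) × (V → Option O))}
    {e : ((P ⊕ Fin n) → ℕ) × (V → Option O)} (h : FiringSeq Wτ s l e) (j : Fin n) :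
    e.1 (Sum.inr j) + cntTr ((j : ℕ) + 1) (l.map Prod.fst) =
      s.1 (Sum.inr j) + cntTr (j : ℕ) (l.map Prod.fst) := by
  induction h with
  | nil s => rfl
  | @cons s t M' η' l e hv hseq ih =>
    replace ih : e.1 (Sum.inr j) + cntTr ((j : ℕ) + 1) (l.map Prod.fst) =
      M' (Sum.inr j) + cntTr (j : ℕ) (l.map Prod.fst) := ih
    cases t with
    | inl t =>
      have hc := chain_inl hpreT hpostT hv j
      simp only [List.map_cons, cntTr]
      omega
    | inr i =>
      have hc := chain_inr hpreE hpostE hv j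
      simp only [List.map_cons, cntTr]
      by_cases h1 : (j : ℕ) + 1 = (i : ℕ)
      · obtain ⟨hpos, heq⟩ := hc.1 h1
        rw [if_pos h1.symm, if_neg (by omega)]
        omega
      · by_cases h2 : (j : ℕ) = (i : ℕ)
        · have heq := hc.2.1 (Fin.ext h2)
          rw [if_neg (by omega), if_pos h2.symm]
          omega
        · have heq := hc.2.2 ⟨h1, fun hji => h2 (by rw [hji])⟩
          rw [if_neg (by omega), if_neg (by omega)]
          omega

lemma decomp {P' T' : Type} {W₀ : DAWNet P' T' V O}
    {s : (P' → ℕ) × (V → Option O)} {l : List (T' × (P' → ℕ) × (V → Option O))}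
    {e : (P' → ℕ) × (V → Option O)} (h : FiringSeq W₀ s l e) :
    ∀ (q : ℕ), q < l.length →
      ∃ m, FiringSeq W₀ s (l.take q) m ∧
        ∀ hq : q < l.length, ValidFiring W₀ m.1 m.2 l[q].1 l[q].2.1 l[q].2.2 := by
  induction h with
  | nil => intro q hq; simp at hq
  | @cons s t M' η' l e hv hseq ih =>
    intro q hq
    cases q with
    | zero => exact ⟨s, FiringSeq.nil s, fun _ => hv⟩
    | succ q =>
      obtain ⟨m, hm1, hm2⟩ := ih q (by simpa using hq)
      exact ⟨m, FiringSeq.cons hv hm1, fun _ => hm2 (by simpa using hq)⟩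


lemma cnt_all_one
    (hpreT : ∀ t : T, Wτ.pre (Sum.inl t) = Sum.inl '' W.pre t)
    (hpostT : ∀ t : T, Wτ.post (Sum.inl t) = Sum.inl '' W.post t)
    (hpreE : ∀ i : Fin n, Wτ.pre (Sum.inr i) =
      Sum.inl '' W.pre (ev i).1 ∪ {q | ∃ j : Fin n, (j : ℕ) + 1 = (i : ℕ) ∧ q = Sum.inr j})
    (hpostE : ∀ i : Fin n, Wτ.post (Sum.inr i) = Sum.inl '' W.post (ev i).1 ∪ {Sum.inr i})
    {M0 : P → ℕ} {sink : P}
    {l : List ((T ⊕ Fin n) × ((P ⊕ Fin n) → ℕ) × (V → Option O))}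
    {e : ((P ⊕ Fin n) → ℕ) × (V → Option O)}
    (h : FiringSeq Wτ (Sum.elim M0 (fun _ => 0), fun _ => none) l e)
    (hf : FinalWτ sink e.1) (i : Fin n) : cntTr (i : ℕ) (l.map Prod.fst) = 1 := by
  have hrel : ∀ j : Fin n, e.1 (Sum.inr j) + cntTr ((j : ℕ) + 1) (l.map Prod.fst) =
      cntTr (j : ℕ) (l.map Prod.fst) := by
    intro j
    have hA := chainA hpreT hpostT hpreE hpostE h j
    simpa using hA
  have key : ∀ d, d < n → cntTr (n - 1 - d) (l.map Prod.fst) = 1 := by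
    intro d
    induction d with
    | zero =>
      intro hd
      have h1 := hrel ⟨n - 1, by omega⟩
      have h2 := (hf.2.2 ⟨n - 1, by omega⟩).2 (by simp; omega)
      simp only [Fin.val_mk] at h1 h2
      rw [show n - 1 + 1 = n by omega, cntTr_top] at h1
      rw [show n - 1 - 0 = n - 1 by omega]
      omega
    | succ d ih =>
      intro hd
      have hone := ih (by omega)
      have h1 := hrel ⟨n - 1 - (d + 1), by omega⟩
      have h0 := (hf.2.2 ⟨n - 1 - (d + 1), by omega⟩).1 (by simp; omega)
      simp only [Fin.val_mk] at h1 h0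
      rw [show n - 1 - (d + 1) + 1 = n - 1 - d by omega] at h1
      omega
  have hi := i.isLt
  have := key (n - 1 - (i : ℕ)) (by omega)
  rw [show n - 1 - (n - 1 - (i : ℕ)) = (i : ℕ) by omega] at this
  exact this

lemma pos_lt
    (hpreT : ∀ t : T, Wτ.pre (Sum.inl t) = Sum.inl '' W.pre t)
    (hpostT : ∀ t : T, Wτ.post (Sum.inl t) = Sum.inl '' W.post t)
    (hpreE : ∀ i : Fin n, Wτ.pre (Sum.inr i) =
      Sum.inl '' W.pre (ev i).1 ∪ {q | ∃ j : Fin n, (j : ℕ) + 1 = (i : ℕ) ∧ q = Sum.inr j})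
    (hpostE : ∀ i : Fin n, Wτ.post (Sum.inr i) = Sum.inl '' W.post (ev i).1 ∪ {Sum.inr i})
    {M0 : P → ℕ}
    {l : List ((T ⊕ Fin n) × ((P ⊕ Fin n) → ℕ) × (V → Option O))}
    {e : ((P ⊕ Fin n) → ℕ) × (V → Option O)}
    (h : FiringSeq Wτ (Sum.elim M0 (fun _ => 0), fun _ => none) l e)
    (hone : ∀ i : Fin n, cntTr (i : ℕ) (l.map Prod.fst) = 1)
    (i i' : Fin n) (hii : (i' : ℕ) = (i : ℕ) + 1)
    (q q' : ℕ) (hq : q < l.length) (hq' : q' < l.length)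
    (hgi : l[q].1 = Sum.inr i) (hgi' : l[q'].1 = Sum.inr i') : q < q' := by
  by_contra hle
  push_neg at hle
  obtain ⟨m, hm1, hm2⟩ := decomp h q' hq'
  have hvτ := hm2 hq'
  rw [hgi'] at hvτ
  have hpre : 0 < m.1 (Sum.inr i) :=
    hvτ.1 _ ((mem_pre_inr_inr hpreE i' i).2 (by omega))
  have hA := chainA hpreT hpostT hpreE hpostE hm1 i
  simp only [Sum.elim_inr] at hA
  have hcpos : 0 < cntTr (i : ℕ) ((l.take q').map Prod.fst) := by omega
  have hdrop : 0 < cntTr (i : ℕ) ((l.drop q').map Prod.fst) := by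
    have hlen2 : q - q' < (l.drop q').length := by simp; omega
    have hlen : q - q' < ((l.drop q').map Prod.fst).length := by simp; omega
    apply cntTr_pos_of_get hlen (k := i)
    rw [List.getElem_map, List.getElem_drop]
    have h3 : l[q' + (q - q')]'(by omega) = l[q]'hq := by congr 1; omega
    rw [h3, hgi]
  have hsplit : cntTr (i : ℕ) (l.map Prod.fst) =
      cntTr (i : ℕ) ((l.take q').map Prod.fst) + cntTr (i : ℕ) ((l.drop q').map Prod.fst) := by
    rw [← cntTr_append, ← List.map_append, List.take_append_drop]
  have := hone i
  omega


lemma direction1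
    (hpreT : ∀ t : T, Wτ.pre (Sum.inl t) = Sum.inl '' W.pre t)
    (hpostT : ∀ t : T, Wτ.post (Sum.inl t) = Sum.inl '' W.post t)
    (hwrT : ∀ t : T, Wτ.wr (Sum.inl t) = W.wr t)
    (hgdT : ∀ (t : T) (η : V → Option O), Wτ.gd (Sum.inl t) η ↔ W.gd t η)
    (hpreE : ∀ i : Fin n, Wτ.pre (Sum.inr i) =
      Sum.inl '' W.pre (ev i).1 ∪ {q | ∃ j : Fin n, (j : ℕ) + 1 = (i : ℕ) ∧ q = Sum.inr j})
    (hpostE : ∀ i : Fin n, Wτ.post (Sum.inr i) = Sum.inl '' W.post (ev i).1 ∪ {Sum.inr i})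
    (hgdE : ∀ (i : Fin n) (η : V → Option O), Wτ.gd (Sum.inr i) η → W.gd (ev i).1 η)
    (hwrE : ∀ (i : Fin n) (v : V),
      (Wτ.wr (Sum.inr i) v = none ↔ W.wr (ev i).1 v = none) ∧
      (∀ s s' : Set O, Wτ.wr (Sum.inr i) v = some s → W.wr (ev i).1 v = some s' →
        s ⊆ s' ∧ (s = ∅ ↔ s' = ∅)))
    (hdata : ∀ (i : Fin n) (M : (P ⊕ Fin n) → ℕ) (η : V → Option O)
        (M' : (P ⊕ Fin n) → ℕ) (η' : V → Option O),
      ValidFiring Wτ M η (Sum.inr i) M' η' → (ev i).2 η')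
    {M0 : P → ℕ} {sink : P}
    {l : List ((T ⊕ Fin n) × ((P ⊕ Fin n) → ℕ) × (V → Option O))}
    {e : ((P ⊕ Fin n) → ℕ) × (V → Option O)}
    (h : FiringSeq Wτ (Sum.elim M0 (fun _ => 0), fun _ => none) l e)
    (hf : FinalWτ sink e.1) :
    FiringSeq W (M0, fun _ => none)
      (l.map fun x => (Sum.elim id (fun i => (ev i).1) x.1,
        fun p => x.2.1 (Sum.inl p), x.2.2))
      ((fun p => e.1 (Sum.inl p)), e.2) ∧
    FinalW sink (fun p => e.1 (Sum.inl p)) ∧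
    Compliant ev (l.map fun x => (Sum.elim id (fun i => (ev i).1) x.1,
        fun p => x.2.1 (Sum.inl p), x.2.2)) := by
  have hone := cnt_all_one hpreT hpostT hpreE hpostE h hf
  have hex : ∀ i : Fin n, ∃ q, ∃ _ : q < (l.map Prod.fst).length,
      ∃ k : Fin n, (l.map Prod.fst)[q] = Sum.inr k ∧ (k : ℕ) = (i : ℕ) :=
    fun i => cntTr_pos (by rw [hone i]; omega)
  choose q hqlt k hget hkv using hex
  have hql : ∀ i, q i < l.length := fun i => by simpa using hqlt i
  have hget' : ∀ i, (l[q i]'(hql i)).1 = Sum.inr i := by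
    intro i
    have hh := hget i
    rw [List.getElem_map] at hh
    have hk : k i = i := Fin.ext (hkv i)
    rw [hk] at hh
    exact hh
  have hstep : ∀ i i' : Fin n, (i' : ℕ) = (i : ℕ) + 1 → q i < q i' := fun i i' hii =>
    pos_lt hpreT hpostT hpreE hpostE h hone i i' hii (q i) (q i') (hql i) (hql i')
      (hget' i) (hget' i')
  have hmonod : ∀ d (i i' : Fin n), (i' : ℕ) = (i : ℕ) + d + 1 → q i < q i' := by
    intro d
    induction d with
    | zero => exact fun i i' hd => hstep i i' (by omega)
    | succ d ih =>
      intro i i' hd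
      have hmlt : (i : ℕ) + d + 1 < n := by have := i'.isLt; omega
      exact lt_trans (ih i ⟨(i : ℕ) + d + 1, hmlt⟩ (by simp))
        (hstep ⟨(i : ℕ) + d + 1, hmlt⟩ i' (by simp; omega))
  refine ⟨proj_seq hpreT hpostT hwrT hgdT hpreE hpostE hgdE hwrE h,
    ⟨hf.1, fun p hp => hf.2.1 p hp⟩, ?_⟩
  refine ⟨fun i => ⟨q i, by simpa using hql i⟩, ?_, ?_⟩
  · intro a b hab
    rw [Fin.lt_def] at hab ⊢
    exact hmonod ((b : ℕ) - (a : ℕ) - 1) a b (by omega)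
  · intro i
    constructor
    · simp only [List.get_eq_getElem, List.getElem_map]
      rw [hget' i]
      rfl
    · obtain ⟨m, hm1, hm2⟩ := decomp h (q i) (hql i)
      have hv := hm2 (hql i)
      rw [hget' i] at hv
      have hd := hdata i m.1 m.2 _ _ hv
      simpa only [List.get_eq_getElem, List.getElem_map] using hd


lemma lift_seq
    (hpreT : ∀ t : T, Wτ.pre (Sum.inl t) = Sum.inl '' W.pre t)
    (hpostT : ∀ t : T, Wτ.post (Sum.inl t) = Sum.inl '' W.post t)
    (hwrT : ∀ t : T, Wτ.wr (Sum.inl t) = W.wr t)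
    (hgdT : ∀ (t : T) (η : V → Option O), Wτ.gd (Sum.inl t) η ↔ W.gd t η)
    (hpreE : ∀ i : Fin n, Wτ.pre (Sum.inr i) =
      Sum.inl '' W.pre (ev i).1 ∪ {q | ∃ j : Fin n, (j : ℕ) + 1 = (i : ℕ) ∧ q = Sum.inr j})
    (hpostE : ∀ i : Fin n, Wτ.post (Sum.inr i) = Sum.inl '' W.post (ev i).1 ∪ {Sum.inr i})
    (hlift : ∀ (i : Fin n) (M : P → ℕ) (η : V → Option O) (M' : P → ℕ) (η' : V → Option O),
      ValidFiring W M η (ev i).1 M' η' → (ev i).2 η' →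
      ∀ Mτ : (P ⊕ Fin n) → ℕ, (∀ p, Mτ (Sum.inl p) = M p) →
        (∀ j : Fin n, (j : ℕ) + 1 = (i : ℕ) → 0 < Mτ (Sum.inr j)) →
        ∃ Mτ' : (P ⊕ Fin n) → ℕ,
          ValidFiring Wτ Mτ η (Sum.inr i) Mτ' η' ∧ ∀ p, Mτ' (Sum.inl p) = M' p) :
    ∀ (l : List (T × (P → ℕ) × (V → Option O))) (s e : (P → ℕ) × (V → Option O)),
      FiringSeq W s l e →
      ∀ (k : ℕ), k ≤ n →
      ∀ (Mτ : (P ⊕ Fin n) → ℕ), (∀ p, Mτ (Sum.inl p) = s.1 p) →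
      (∀ j : Fin n, Mτ (Sum.inr j) = if (j : ℕ) + 1 = k then 1 else 0) →
      ∀ γ : (i : Fin n) → k ≤ (i : ℕ) → Fin l.length,
      (∀ (i i' : Fin n) (hi : k ≤ (i : ℕ)) (hi' : k ≤ (i' : ℕ)), (i : ℕ) < (i' : ℕ) →
        (γ i hi : ℕ) < (γ i' hi' : ℕ)) →
      (∀ i hi, (l.get (γ i hi)).1 = (ev i).1 ∧ (ev i).2 (l.get (γ i hi)).2.2) →
      ∃ (l' : List ((T ⊕ Fin n) × ((P ⊕ Fin n) → ℕ) × (V → Option O)))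
        (Mτe : (P ⊕ Fin n) → ℕ),
        FiringSeq Wτ (Mτ, s.2) l' (Mτe, e.2) ∧
        (l'.map fun x => (Sum.elim id (fun i => (ev i).1) x.1,
          fun p => x.2.1 (Sum.inl p), x.2.2)) = l ∧
        (∀ p, Mτe (Sum.inl p) = e.1 p) ∧
        (∀ j : Fin n, Mτe (Sum.inr j) = if (j : ℕ) + 1 = n then 1 else 0) := by
  intro l
  induction l with
  | nil =>
    intro s e h k hk Mτ hagree hchain γ hmono hcompl
    cases h
    by_cases hkn : k < n
    · exact ((γ ⟨k, hkn⟩ (le_refl k)).elim0)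
    · have hkn' : k = n := by omega
      subst hkn'
      exact ⟨[], Mτ, FiringSeq.nil _, rfl, hagree, hchain⟩
  | cons x tl ih =>
    intro s e h k hk Mτ hagree hchain γ hmono hcompl
    obtain ⟨t, M', η'⟩ := x
    cases h with
    | cons hv hseq =>
    by_cases hrep : ∃ hkn : k < n, ((γ ⟨k, hkn⟩ (le_refl k) : Fin _) : ℕ) = 0
    · obtain ⟨hkn, hγ0⟩ := hrep
      have hc := hcompl ⟨k, hkn⟩ (le_refl k)
      have hgidx : (γ (⟨k, hkn⟩ : Fin n) (le_refl k)) = ⟨0, by simp⟩ := Fin.ext hγ0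
      rw [hgidx] at hc
      replace hc : t = (ev ⟨k, hkn⟩).1 ∧ (ev (⟨k, hkn⟩ : Fin n)).2 η' := hc
      have hv' : ValidFiring W s.1 s.2 (ev (⟨k, hkn⟩ : Fin n)).1 M' η' := by
        rw [← hc.1]; exact hv
      obtain ⟨Mτ', hvτ, hMτ'⟩ := hlift ⟨k, hkn⟩ s.1 s.2 M' η' hv' hc.2 Mτ hagree
        (fun j hj => by rw [hchain j, if_pos hj]; omega)
      have hchain' : ∀ j : Fin n, Mτ' (Sum.inr j) = if (j : ℕ) + 1 = k + 1 then 1 else 0 := by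
        intro j
        have hcj := chain_inr hpreE hpostE hvτ j
        by_cases hji : j = (⟨k, hkn⟩ : Fin n)
        · subst hji
          rw [hcj.2.1 rfl, hchain]
          simp
        · have hjk : (j : ℕ) ≠ k := fun hh => hji (Fin.ext hh)
          by_cases hj1 : (j : ℕ) + 1 = k
          · rw [(hcj.1 hj1).2, hchain, if_pos hj1, if_neg (by omega)]
          · rw [hcj.2.2 ⟨hj1, hji⟩, hchain, if_neg hj1, if_neg (by omega)]
      have hγpos : ∀ (i : Fin n) (hi : k + 1 ≤ (i : ℕ)),
          1 ≤ ((γ i (by omega) : Fin _) : ℕ) := by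
        intro i hi
        have := hmono ⟨k, hkn⟩ i (le_refl k) (by omega) (by simpa using hi)
        omega
      obtain ⟨l'', Mτe, hseq', hmap, he1, he2⟩ := ih (M', η') e hseq (k + 1) (by omega) Mτ' hMτ' hchain'
        (fun i hi => ⟨((γ i (by omega) : Fin _) : ℕ) - 1, by
          have h2 := (γ i (by omega : k ≤ (i : ℕ))).isLt
          simp only [List.length_cons] at h2
          have h1 := hγpos i hi
          omega⟩)
        (fun i i' hi hi' hlt => by
          have h1 := hγpos i hi
          have h2 := hγpos i' hi'
          have h3 := hmono i i' (by omega) (by omega) hlt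
          simp only []
          omega)
        (fun i hi => by
          have h1 := hγpos i hi
          rw [show (tl.get ⟨((γ i (by omega) : Fin _) : ℕ) - 1, _⟩) =
            ((t, M', η') :: tl).get (γ i (by omega)) from
            (get_cons_of_pos _ _ _ h1 _).symm]
          exact hcompl i (by omega))
      refine ⟨(Sum.inr ⟨k, hkn⟩, Mτ', η') :: l'', Mτe, FiringSeq.cons hvτ hseq', ?_, he1, he2⟩
      rw [List.map_cons, hmap]
      have hfun : (fun p => Mτ' (Sum.inl p)) = M' := funext hMτ'
      rw [hfun]
      simp only [Sum.elim_inr, ← hc.1]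
    · have hγpos : ∀ (i : Fin n) (hi : k ≤ (i : ℕ)),
          1 ≤ ((γ i hi : Fin _) : ℕ) := by
        intro i hi
        by_cases hkn : k < n
        · rcases Nat.eq_or_lt_of_le hi with heq | hlt
          · obtain rfl : (⟨k, hkn⟩ : Fin n) = i := Fin.ext heq
            by_contra h0
            exact hrep ⟨hkn, by omega⟩
          · have := hmono ⟨k, hkn⟩ i (le_refl k) hi hlt
            omega
        · exact absurd (lt_of_le_of_lt hi i.isLt) hkn
      have hvτ : ValidFiring Wτ Mτ s.2 (Sum.inl t)
          (Sum.elim M' (fun j => if (j : ℕ) + 1 = k then 1 else 0)) η' := by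
        obtain ⟨hpre, hgd, hmark, hwr, hwrn⟩ := hv
        refine ⟨?_, (hgdT t s.2).2 hgd, ?_, ?_, ?_⟩
        · intro pq hpq
          rw [hpreT] at hpq
          obtain ⟨p, hp, rfl⟩ := hpq
          rw [hagree]
          exact hpre p hp
        · intro pq
          cases pq with
          | inl p =>
            have hm := hmark p
            rw [mem_pre_inl_inl (W := W) hpreT, mem_post_inl_inl (W := W) hpostT]
            refine ⟨fun hh => ?_, fun hh => ?_, fun hh => ?_⟩
            · show M' p = Mτ (Sum.inl p) - 1
              rw [hagree]; exact hm.1 hh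
            · show M' p = Mτ (Sum.inl p) + 1
              rw [hagree]; exact hm.2.1 hh
            · show M' p = Mτ (Sum.inl p)
              rw [hagree]; exact hm.2.2 hh
          | inr j =>
            refine ⟨fun hh => absurd hh.1 (not_mem_pre_inl_inr (W := W) hpreT t j),
              fun hh => absurd hh.1 (not_mem_post_inl_inr (W := W) hpostT t j),
              fun _ => ?_⟩
            show (if (j : ℕ) + 1 = k then 1 else 0) = Mτ (Sum.inr j)
            rw [hchain]
        · intro v sets hs
          exact hwr v sets (by rwa [hwrT] at hs)
        · intro v hvn
          exact hwrn v (by rwa [hwrT] at hvn)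
      obtain ⟨l'', Mτe, hseq', hmap, he1, he2⟩ := ih (M', η') e hseq k hk
        (Sum.elim M' (fun j => if (j : ℕ) + 1 = k then 1 else 0)) (fun p => rfl) (fun j => rfl)
        (fun i hi => ⟨((γ i hi : Fin _) : ℕ) - 1, by
          have h2 := (γ i hi).isLt
          simp only [List.length_cons] at h2
          have h1 := hγpos i hi
          omega⟩)
        (fun i i' hi hi' hlt => by
          have h1 := hγpos i hi
          have h2 := hγpos i' hi'
          have h3 := hmono i i' hi hi' hlt
          simp only []
          omega)
        (fun i hi => by
          have h1 := hγpos i hi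
          rw [show (tl.get ⟨((γ i hi : Fin _) : ℕ) - 1, _⟩) =
            ((t, M', η') :: tl).get (γ i hi) from
            (get_cons_of_pos _ _ _ h1 _).symm]
          exact hcompl i hi)
      refine ⟨(Sum.inl t, Sum.elim M' (fun j => if (j : ℕ) + 1 = k then 1 else 0), η') :: l'',
        Mτe, FiringSeq.cons hvτ hseq', ?_, he1, he2⟩
      rw [List.map_cons, hmap]
      rfl

end Net

end TraceWF

/-- Cases of the trace workflow exactly characterize the compliant cases of the original
workflow: (1) the projection of every case of `Wτ` is a case of `W` with which the full
trace is compliant; (2) every case of `W` with which the trace is compliant lifts to a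
case of `Wτ` projecting back onto it. -/
theorem trace_workflow_cases_characterization {P T V O : Type} {n : ℕ}
    (W : DAWNet P T V O) (Wτ : DAWNet (P ⊕ Fin n) (T ⊕ Fin n) V O)
    (ev : Fin n → T × ((V → Option O) → Prop)) (start sink : P)
    (hpreT : ∀ t : T, Wτ.pre (Sum.inl t) = Sum.inl '' W.pre t)
    (hpostT : ∀ t : T, Wτ.post (Sum.inl t) = Sum.inl '' W.post t)
    (hwrT : ∀ t : T, Wτ.wr (Sum.inl t) = W.wr t)
    (hgdT : ∀ (t : T) (η : V → Option O), Wτ.gd (Sum.inl t) η ↔ W.gd t η)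
    (hpreE : ∀ i : Fin n, Wτ.pre (Sum.inr i) =
      Sum.inl '' W.pre (ev i).1 ∪ {q | ∃ j : Fin n, (j : ℕ) + 1 = (i : ℕ) ∧ q = Sum.inr j})
    (hpostE : ∀ i : Fin n, Wτ.post (Sum.inr i) = Sum.inl '' W.post (ev i).1 ∪ {Sum.inr i})
    (hgdE : ∀ (i : Fin n) (η : V → Option O), Wτ.gd (Sum.inr i) η → W.gd (ev i).1 η)
    (hwrE : ∀ (i : Fin n) (v : V),
      (Wτ.wr (Sum.inr i) v = none ↔ W.wr (ev i).1 v = none) ∧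
      (∀ s s' : Set O, Wτ.wr (Sum.inr i) v = some s → W.wr (ev i).1 v = some s' →
        s ⊆ s' ∧ (s = ∅ ↔ s' = ∅)))
    (hdata : ∀ (i : Fin n) (M : (P ⊕ Fin n) → ℕ) (η : V → Option O)
        (M' : (P ⊕ Fin n) → ℕ) (η' : V → Option O),
      ValidFiring Wτ M η (Sum.inr i) M' η' → (ev i).2 η')
    (hlift : ∀ (i : Fin n) (M : P → ℕ) (η : V → Option O) (M' : P → ℕ) (η' : V → Option O),
      ValidFiring W M η (ev i).1 M' η' → (ev i).2 η' →
      ∀ Mτ : (P ⊕ Fin n) → ℕ, (∀ p, Mτ (Sum.inl p) = M p) →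
        (∀ j : Fin n, (j : ℕ) + 1 = (i : ℕ) → 0 < Mτ (Sum.inr j)) →
        ∃ Mτ' : (P ⊕ Fin n) → ℕ,
          ValidFiring Wτ Mτ η (Sum.inr i) Mτ' η' ∧ ∀ p, Mτ' (Sum.inl p) = M' p)
    (M0 : P → ℕ)
    (hM0 : M0 start = 1 ∧ ∀ p, p ≠ start → M0 p = 0) :
    (∀ (l : List ((T ⊕ Fin n) × ((P ⊕ Fin n) → ℕ) × (V → Option O)))
        (e : ((P ⊕ Fin n) → ℕ) × (V → Option O)),
      FiringSeq Wτ (Sum.elim M0 (fun _ => 0), fun _ => none) l e → FinalWτ sink e.1 →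
        FiringSeq W (M0, fun _ => none)
          (l.map fun x =>
            (Sum.elim id (fun i => (ev i).1) x.1, fun p => x.2.1 (Sum.inl p), x.2.2))
          ((fun p => e.1 (Sum.inl p)), e.2) ∧
        FinalW sink (fun p => e.1 (Sum.inl p)) ∧
        Compliant ev
          (l.map fun x =>
            (Sum.elim id (fun i => (ev i).1) x.1, fun p => x.2.1 (Sum.inl p), x.2.2))) ∧
    (∀ (l : List (T × (P → ℕ) × (V → Option O))) (e : (P → ℕ) × (V → Option O)),
      FiringSeq W (M0, fun _ => none) l e → FinalW sink e.1 → Compliant ev l →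
        ∃ (l' : List ((T ⊕ Fin n) × ((P ⊕ Fin n) → ℕ) × (V → Option O)))
          (e' : ((P ⊕ Fin n) → ℕ) × (V → Option O)),
          FiringSeq Wτ (Sum.elim M0 (fun _ => 0), fun _ => none) l' e' ∧
          FinalWτ sink e'.1 ∧
          (l'.map fun x =>
            (Sum.elim id (fun i => (ev i).1) x.1, fun p => x.2.1 (Sum.inl p), x.2.2)) = l ∧
          (fun p => e'.1 (Sum.inl p)) = e.1 ∧ e'.2 = e.2) := by
  constructor
  · intro l e h hfin
    exact TraceWF.direction1 hpreT hpostT hwrT hgdT hpreE hpostE hgdE hwrE hdata h hfin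
  · intro l e h hfin hcompl
    obtain ⟨γ0, hm0, hc0⟩ := hcompl
    obtain ⟨l', Mτe, hseq', hmap, he1, he2⟩ :=
      TraceWF.lift_seq hpreT hpostT hwrT hgdT hpreE hpostE hlift
        l (M0, fun _ => none) e h 0 (Nat.zero_le n) (Sum.elim M0 (fun _ => 0))
        (fun p => rfl) (fun j => by simp)
        (fun i _ => γ0 i)
        (fun i i' hi hi' hlt => hm0 hlt)
        (fun i _ => hc0 i)
    refine ⟨l', (Mτe, e.2), hseq', ?_, hmap, funext he1, rfl⟩
    exact ⟨by show Mτe (Sum.inl sink) = 1; rw [he1 sink]; exact hfin.1,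
      fun p hp => by show Mτe (Sum.inl p) = 0; rw [he1 p]; exact hfin.2 p hp,
      fun j => ⟨fun hlt => by show Mτe (Sum.inr j) = 0; rw [he2 j, if_neg (by omega)],
        fun heq => by show Mτe (Sum.inr j) = 1; rw [he2 j, if_pos heq]⟩⟩
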